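/- For every real p ≥ 2 and all real numbers a, b, the quantity max(|a|^{p-1}|b|, |a||b|^{p-1}) is at most |(|a|^p + |b|^p - |a-b|^p)|, which in turn is at most (1 + p·2^{p-1})·max(|a|^{p-1}|b|, |a||b|^{p-1}). -/

import Mathlib

open Real

private lemma rsplit {p x : ℝ} (hx : 0 ≤ x) (hp : 1 < p) : x ^ p = x ^ (p - 1) * x := by
  rcases eq_or_lt_of_le hx with h | h
  · rw [← h, Real.zero_rpow (by linarith), Real.zero_rpow (by linarith), zero_mul]
  · rw [← Real.rpow_add_one h.ne' (p - 1), sub_add_cancel]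

private lemma mvt_upper {p x y : ℝ} (hy : 0 ≤ y) (hxy : y ≤ x) (hp : 1 < p) :
    x ^ p - y ^ p ≤ p * x ^ (p - 1) * (x - y) := by
  rcases eq_or_lt_of_le (hy.trans hxy) with h | hx
  · have hx0 : x = 0 := h.symm
    have hy0 : y = 0 := le_antisymm (by linarith) hy
    simp [hx0, hy0, Real.zero_rpow (by linarith : p ≠ 0)]
  · set s : ℝ := (y - x) / x with hs
    have hs1 : -1 ≤ s := by
      rw [hs, neg_le, ← neg_div, div_le_one hx]; linarith
    have hb := one_add_mul_self_le_rpow_one_add hs1 hp.le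
    have h1s : 1 + s = y / x := by field_simp [hs]; rw [hs, add_mul, div_mul_cancel₀ _ hx.ne']; ring
    rw [h1s, Real.div_rpow hy hx.le] at hb
    have hxp : 0 < x ^ p := Real.rpow_pos_of_pos hx p
    have hb2 : (1 + p * s) * x ^ p ≤ y ^ p := by
      calc (1 + p * s) * x ^ p ≤ (y ^ p / x ^ p) * x ^ p := by nlinarith
        _ = y ^ p := by field_simp
    have hxs : x ^ p = x ^ (p - 1) * x := rsplit hx.le hp
    have hsx : s * x ^ p = (y - x) * x ^ (p - 1) := by
      rw [hs, hxs]; field_simp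
    nlinarith [hsx]

private lemma mvt_lower {p x y : ℝ} (hy : 0 ≤ y) (hxy : y ≤ x) (hp : 1 < p) :
    p * y ^ (p - 1) * (x - y) ≤ x ^ p - y ^ p := by
  rcases eq_or_lt_of_le hy with h | hy'
  · rw [← h, Real.zero_rpow (by linarith : p - 1 ≠ 0), Real.zero_rpow (by linarith : p ≠ 0)]
    simpa using Real.rpow_nonneg (h ▸ hxy) p
  · set s : ℝ := (x - y) / y with hs
    have hs0 : 0 ≤ s := div_nonneg (by linarith) hy'.le
    have hb := one_add_mul_self_le_rpow_one_add (by linarith : (-1:ℝ) ≤ s) hp.le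
    have h1s : 1 + s = x / y := by field_simp [hs]; rw [hs, add_mul, div_mul_cancel₀ _ hy'.ne']; ring
    rw [h1s, Real.div_rpow (hy'.le.trans hxy) hy'.le] at hb
    have hyp : 0 < y ^ p := Real.rpow_pos_of_pos hy' p
    have hb2 : (1 + p * s) * y ^ p ≤ x ^ p := by
      calc (1 + p * s) * y ^ p ≤ (x ^ p / y ^ p) * y ^ p := by nlinarith
        _ = x ^ p := by field_simp
    have hys : y ^ p = y ^ (p - 1) * y := rsplit hy'.le hp
    have hsy : s * y ^ p = (x - y) * y ^ (p - 1) := by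
      rw [hs, hys]; field_simp
    nlinarith [hsy]

private lemma two_rpow_ge_one {p : ℝ} (hp : 2 ≤ p) : (1:ℝ) ≤ 2 ^ (p - 1) := by
  have := Real.rpow_le_rpow_of_exponent_le (one_le_two) (by linarith : (0:ℝ) ≤ p - 1)
  simpa using this

private lemma same_lower {p A B : ℝ} (hp : 2 ≤ p) (hB : 0 ≤ B) (hBA : B ≤ A) :
    A ^ (p - 1) * B ≤ A ^ p + B ^ p - (A - B) ^ p := by
  have hA : 0 ≤ A := hB.trans hBA
  have hp1 : 1 < p := by linarith
  have h1 : (A - B) ^ (p - 1) ≤ A ^ (p - 1) :=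
    Real.rpow_le_rpow (by linarith) (by linarith) (by linarith)
  have h2 : (A - B) ^ p = (A - B) ^ (p - 1) * (A - B) := rsplit (by linarith) hp1
  have h3 : A ^ p = A ^ (p - 1) * A := rsplit hA hp1
  have h4 : 0 ≤ B ^ p := Real.rpow_nonneg hB p
  have h5 : 0 ≤ (A - B) ^ (p - 1) := Real.rpow_nonneg (by linarith) _
  nlinarith [mul_le_mul_of_nonneg_right h1 (by linarith : (0:ℝ) ≤ A - B)]

private lemma same_upper {p A B : ℝ} (hp : 2 ≤ p) (hB : 0 ≤ B) (hBA : B ≤ A) :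
    A ^ p + B ^ p - (A - B) ^ p ≤ (1 + p * 2 ^ (p - 1)) * (A ^ (p - 1) * B) := by
  have hA : 0 ≤ A := hB.trans hBA
  have hp1 : 1 < p := by linarith
  have h1 := mvt_upper (by linarith : (0:ℝ) ≤ A - B) (by linarith : A - B ≤ A) hp1
  have h2 : B ^ p = B ^ (p - 1) * B := rsplit hB hp1
  have h3 : B ^ (p - 1) ≤ A ^ (p - 1) := Real.rpow_le_rpow hB hBA (by linarith)
  have h4 : 0 ≤ A ^ (p - 1) := Real.rpow_nonneg hA _
  have h5 := two_rpow_ge_one hp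
  nlinarith [mul_le_mul_of_nonneg_right h3 hB,
    mul_nonneg (mul_nonneg h4 hB) (by linarith : (0:ℝ) ≤ 2 ^ (p-1) - 1)]

private lemma opp_lower {p A B : ℝ} (hp : 2 ≤ p) (hB : 0 ≤ B) (hBA : B ≤ A) :
    A ^ (p - 1) * B ≤ (A + B) ^ p - A ^ p - B ^ p := by
  have hA : 0 ≤ A := hB.trans hBA
  have hp1 : 1 < p := by linarith
  have h1 := mvt_lower hA (by linarith : A ≤ A + B) hp1
  have h2 : B ^ p = B ^ (p - 1) * B := rsplit hB hp1
  have h3 : B ^ (p - 1) ≤ A ^ (p - 1) := Real.rpow_le_rpow hB hBA (by linarith)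
  have h4 : 0 ≤ A ^ (p - 1) := Real.rpow_nonneg hA _
  nlinarith [mul_le_mul_of_nonneg_right h3 hB, mul_nonneg h4 hB]

private lemma opp_upper {p A B : ℝ} (hp : 2 ≤ p) (hB : 0 ≤ B) (hBA : B ≤ A) :
    (A + B) ^ p - A ^ p - B ^ p ≤ (1 + p * 2 ^ (p - 1)) * (A ^ (p - 1) * B) := by
  have hA : 0 ≤ A := hB.trans hBA
  have hp1 : 1 < p := by linarith
  have h1 := mvt_upper hA (by linarith : A ≤ A + B) hp1
  have h2 : (A + B) ^ (p - 1) ≤ (2 * A) ^ (p - 1) :=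
    Real.rpow_le_rpow (by linarith) (by linarith) (by linarith)
  have h2' : (2 * A) ^ (p - 1) = 2 ^ (p - 1) * A ^ (p - 1) :=
    Real.mul_rpow (by norm_num) hA
  have h4 : 0 ≤ A ^ (p - 1) * B := mul_nonneg (Real.rpow_nonneg hA _) hB
  have h5 : 0 ≤ B ^ p := Real.rpow_nonneg hB p
  rw [h2'] at h2
  nlinarith [mul_le_mul_of_nonneg_left h2 (mul_nonneg (by linarith : (0:ℝ) ≤ p) hB)]

private lemma abs_sub_same_sign {a b : ℝ} (h : 0 ≤ a * b) (hba : |b| ≤ |a|) :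
    |a - b| = |a| - |b| := by
  rcases le_total 0 a with ha | ha <;> rcases le_total 0 b with hb | hb
  · rw [abs_of_nonneg ha, abs_of_nonneg hb] at hba ⊢
    rw [abs_of_nonneg (by linarith)]
  · have hb0 : b = 0 := by
      rw [abs_of_nonneg ha, abs_of_nonpos hb] at hba
      have : b * b ≤ 0 := by nlinarith
      exact mul_self_eq_zero.mp (le_antisymm this (mul_self_nonneg b))
    simp [hb0, abs_of_nonneg ha]
  · have hb0 : b = 0 := by
      rw [abs_of_nonpos ha, abs_of_nonneg hb] at hba
      have : b * b ≤ 0 := by nlinarith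
      exact mul_self_eq_zero.mp (le_antisymm this (mul_self_nonneg b))
    simp [hb0, abs_of_nonpos ha]
  · rw [abs_of_nonpos ha, abs_of_nonpos hb] at hba ⊢
    rw [abs_of_nonpos (by linarith)]; ring

private lemma abs_sub_opp_sign {a b : ℝ} (h : a * b < 0) : |a - b| = |a| + |b| := by
  rcases mul_neg_iff.mp h with ⟨ha, hb⟩ | ⟨ha, hb⟩
  · rw [abs_of_pos ha, abs_of_neg hb, abs_of_pos (by linarith)]; ring
  · rw [abs_of_neg ha, abs_of_pos hb, abs_of_nonpos (by linarith)]; ring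

private lemma key (p : ℝ) (hp : 2 ≤ p) (a b : ℝ) (hba : |b| ≤ |a|) :
    max (|a| ^ (p - 1) * |b|) (|a| * |b| ^ (p - 1)) ≤
      |(|a| ^ p + |b| ^ p - |a - b| ^ p)| ∧
    |(|a| ^ p + |b| ^ p - |a - b| ^ p)| ≤
      (1 + p * 2 ^ (p - 1)) * max (|a| ^ (p - 1) * |b|) (|a| * |b| ^ (p - 1)) := by
  set A := |a| with hA
  set B := |b| with hB
  have hB0 : 0 ≤ B := abs_nonneg b
  have hA0 : 0 ≤ A := abs_nonneg a
  have hp1 : 1 < p := by linarith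
  have hmax : max (A ^ (p - 1) * B) (A * B ^ (p - 1)) = A ^ (p - 1) * B := by
    apply max_eq_left
    rcases eq_or_lt_of_le hB0 with h0 | h0
    · rw [← h0, Real.zero_rpow (by linarith : p - 1 ≠ 0)]; simp
    · have hA0' : 0 < A := lt_of_lt_of_le h0 hba
      have h1 : B ^ (p - 2) ≤ A ^ (p - 2) := Real.rpow_le_rpow hB0 hba (by linarith)
      have h2 : B ^ (p - 1) = B ^ (p - 2) * B := by
        rw [← Real.rpow_add_one h0.ne' (p - 2)]; ring_nf
      have h3 : A ^ (p - 1) = A ^ (p - 2) * A := by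
        rw [← Real.rpow_add_one hA0'.ne' (p - 2)]; ring_nf
      rw [h2, h3]
      nlinarith [mul_le_mul_of_nonneg_right h1 (mul_nonneg hA0 hB0)]
  rw [hmax]
  have hXnn : 0 ≤ A ^ (p - 1) * B := mul_nonneg (Real.rpow_nonneg hA0 _) hB0
  rcases le_or_gt 0 (a * b) with hs | hs
  · have hC : |a - b| = A - B := abs_sub_same_sign hs hba
    rw [hC]
    have hl := same_lower hp hB0 hba
    have hu := same_upper hp hB0 hba
    have hpos : 0 ≤ A ^ p + B ^ p - (A - B) ^ p := le_trans hXnn hl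
    rw [abs_of_nonneg hpos]
    exact ⟨hl, hu⟩
  · have hC : |a - b| = A + B := abs_sub_opp_sign hs
    rw [hC]
    have hl := opp_lower hp hB0 hba
    have hu := opp_upper hp hB0 hba
    have hneg : A ^ p + B ^ p - (A + B) ^ p ≤ 0 := by linarith
    rw [abs_of_nonpos hneg]
    constructor <;> linarith

/-- For p ≥ 2 and all reals a, b:
max(|a|^{p-1}|b|, |a||b|^{p-1}) ≤ | |a|^p + |b|^p - |a-b|^p |
  ≤ (1 + p·2^{p-1}) · max(|a|^{p-1}|b|, |a||b|^{p-1}). -/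
theorem stmt0 (p : ℝ) (hp : 2 ≤ p) (a b : ℝ) :
    max (|a| ^ (p - 1) * |b|) (|a| * |b| ^ (p - 1)) ≤
      |(|a| ^ p + |b| ^ p - |a - b| ^ p)| ∧
    |(|a| ^ p + |b| ^ p - |a - b| ^ p)| ≤
      (1 + p * 2 ^ (p - 1)) * max (|a| ^ (p - 1) * |b|) (|a| * |b| ^ (p - 1)) := by
  rcases le_total |b| |a| with h | h
  · exact key p hp a b h
  · have := key p hp b a h
    rw [abs_sub_comm b a, max_comm, add_comm (|b| ^ p)] at this
    have e : max (|a| ^ (p - 1) * |b|) (|a| * |b| ^ (p - 1)) =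
        max (|b| * |a| ^ (p - 1)) (|b| ^ (p - 1) * |a|) := by
      rw [mul_comm (|a| ^ (p - 1)) (|b|), mul_comm (|a|) (|b| ^ (p - 1))]
    rw [e]; exact this
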